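/- Let B ⊆ ℝ^N be an open ball, 1 < p < ∞, and let u, ū ∈ C¹(B) with ∫_B |∇u|^p dx < ∞ and ∫_B |∇ū|^p dx < ∞. Assume the orthogonality relation ∫_B |∇ū|^{p−2} ∇ū · (∇u − ∇ū) dx = 0 (the integrand being read as 0 wherever ∇ū = 0). Then there exists a constant C > 0 depending only on N and p such that: if p ≥ 2, ∫_B (|∇u|^p − |∇ū|^p) dx ≥ C ∫_B |∇u − ∇ū|^p dx; and if 1 < p ≤ 2, ∫_B (|∇u|^p − |∇ū|^p) dx ≥ C ∫_B (|∇u| + |∇ū|)^{p−2} |∇u − ∇ū|² dx (the integrand being read as 0 wherever ∇u = ∇ū = 0). -/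

import Mathlib

open MeasureTheory Metric Set
open scoped InnerProductSpace

/-- The Alt–Phillips potential `F_γ(t) = λ₊ (t₊)^γ + λ₋ (t₋)^γ`. -/
noncomputable def Fgam (γ lp lm : ℝ) (t : ℝ) : ℝ :=
  lp * (max t 0) ^ γ + lm * (max (-t) 0) ^ γ

/-- `u` is a `C¹(Ω)` function with `∫_Ω ‖∇u‖^p < ∞` which is a local minimizer of the
functional with density `‖∇v‖^p/p + F(v)`, with respect to Lipschitz competitors on
balls compactly contained in `Ω` agreeing with `u` on the boundary sphere. -/
def APLocMin (N : ℕ) (p : ℝ) (F : ℝ → ℝ) (Ω : Set (EuclideanSpace ℝ (Fin N)))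
    (u : EuclideanSpace ℝ (Fin N) → ℝ) : Prop :=
  (∀ x ∈ Ω, DifferentiableAt ℝ u x) ∧
  ContinuousOn (fun x => gradient u x) Ω ∧
  IntegrableOn (fun x => ‖gradient u x‖ ^ p) Ω volume ∧
  ∀ (z : EuclideanSpace ℝ (Fin N)) (r : ℝ), 0 < r → closure (Metric.ball z r) ⊆ Ω →
    ∀ (v : EuclideanSpace ℝ (Fin N) → ℝ) (K : NNReal),
      LipschitzOnWith K v (closure (Metric.ball z r)) →
      Set.EqOn v u (Metric.sphere z r) →
      (∫ x in Metric.ball z r, (‖gradient u x‖ ^ p / p + F (u x))) ≤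
        ∫ x in Metric.ball z r, (‖gradient v x‖ ^ p / p + F (v x))

set_option linter.unusedSectionVars false
set_option linter.unusedVariables false


lemma aux_young {p x y : ℝ} (hp : 1 < p) (hx : 0 ≤ x) (hy : 0 ≤ y) :
    p * (x ^ (p-1) * y) ≤ (p-1) * x ^ p + y ^ p := by
  have hp0 : (0:ℝ) < p := by linarith
  have h := Real.geom_mean_le_arith_mean2_weighted (w₁ := (p-1)/p) (w₂ := 1/p)
    (p₁ := x ^ p) (p₂ := y ^ p) (div_nonneg (by linarith) hp0.le) (by positivity)
    (Real.rpow_nonneg hx p) (Real.rpow_nonneg hy p) (by field_simp; ring)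
  rw [← Real.rpow_mul hx, ← Real.rpow_mul hy] at h
  rw [show p * ((p-1)/p) = p - 1 by field_simp, show p * (1/p) = 1 by field_simp,
    Real.rpow_one] at h
  have h2 := mul_le_mul_of_nonneg_left h hp0.le
  have h3 : p * ((p - 1) / p * x ^ p + 1 / p * y ^ p) = (p-1) * x ^ p + y ^ p := by
    field_simp
  linarith [h2, h3.le, h3.ge]

lemma scalarS {p : ℝ} (hp1 : 1 < p) (hp2 : p ≤ 2) {s t : ℝ} (hs : 0 ≤ s) (ht : 0 ≤ t) :
    p * (p-1) / 2 * ((t + s) ^ (p-2) * (t - s)^2) ≤ t ^ p - s ^ p - p * s ^ (p-1) * (t - s) := by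
  have hp0 : (0:ℝ) < p := by linarith
  have hc1 : p * (p-1) / 2 ≤ 1 := by nlinarith
  have hc0 : 0 < p * (p-1) / 2 := by nlinarith
  rcases eq_or_lt_of_le hs with hs0 | hs0
  · -- s = 0
    subst_vars
    rw [Real.zero_rpow hp0.ne', Real.zero_rpow (ne_of_gt (by linarith) : p - 1 ≠ 0)]
    rcases eq_or_lt_of_le ht with ht0 | ht0
    · subst_vars
      simp [Real.zero_rpow hp0.ne']
    · have hre : (t + 0) ^ (p-2) * (t - 0)^2 = t ^ p := by
        rw [add_zero, sub_zero, ← Real.rpow_two, ← Real.rpow_add ht0]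
        norm_num
      rw [hre]
      nlinarith [Real.rpow_nonneg ht p]
  rcases eq_or_lt_of_le ht with ht0 | ht0
  · -- t = 0
    subst_vars
    rw [Real.zero_rpow hp0.ne']
    have h1 : s ^ p = s ^ (p-1) * s := by
      rw [show p = (p-1) + 1 by ring, Real.rpow_add_one hs0.ne']
      ring_nf
    have h2 : (0 + s) ^ (p-2) * (0 - s)^2 = s ^ p := by
      rw [zero_add, show (0 - s)^2 = s^2 by ring, ← Real.rpow_two, ← Real.rpow_add hs0]
      norm_num
    rw [h2]
    nlinarith [h1, mul_nonneg (show (0:ℝ) ≤ p - 1 - p*(p-1)/2 by nlinarith)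
      (Real.rpow_nonneg hs p)]
  · -- s, t > 0
    set K : ℝ := p * (p-1) * ((s + t) ^ (p-2)) with hK
    have hKnn : 0 ≤ K := by
      have h := Real.rpow_nonneg (by linarith : (0:ℝ) ≤ s + t) (p-2)
      exact mul_nonneg (by nlinarith) h
    set F : ℝ → ℝ := fun x => p*t*x^(p-1) - (p-1)*x^p + K/2*(t-x)^2 with hF
    have hder : ∀ x : ℝ, 0 < x → HasDerivAt F ((t - x) * (p*(p-1)*x^(p-2) - K)) x := by
      intro x hx
      have d1 : HasDerivAt (fun y : ℝ => y ^ (p-1)) ((p-1) * x ^ (p-2)) x := by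
        have := Real.hasDerivAt_rpow_const (x := x) (p := p-1) (Or.inl hx.ne')
        simpa [show p - 1 - 1 = p - 2 by ring] using this
      have d2 : HasDerivAt (fun y : ℝ => y ^ p) (p * x ^ (p-1)) x :=
        Real.hasDerivAt_rpow_const (x := x) (p := p) (Or.inl hx.ne')
      have d3 : HasDerivAt (fun y : ℝ => (t - y)^2) (2 * (t - x) * (-1)) x := by
        have : HasDerivAt (fun y : ℝ => t - y) (-1) x := (hasDerivAt_id x).const_sub t
        simpa using this.fun_pow 2
      have := ((d1.const_mul (p*t)).sub (d2.const_mul (p-1))).add (d3.const_mul (K/2))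
      refine HasDerivAt.congr_deriv this ?_
      have hxp1 : x ^ (p-1) = x ^ (p-2) * x := by
        rw [show p - 1 = (p-2) + 1 by ring, Real.rpow_add_one hx.ne']
      rw [hxp1]; ring
    have hFC : ∀ x : ℝ, 0 < x → ContinuousAt F x := fun x hx => (hder x hx).continuousAt
    have key : F s ≤ F t := by
      rcases le_total s t with hst | hst
      · have hmono : MonotoneOn F (Icc s t) := by
          apply monotoneOn_of_deriv_nonneg (convex_Icc s t)
          · exact fun x hx => (hFC x (lt_of_lt_of_le hs0 hx.1)).continuousWithinAt
          · intro x hx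
            rw [interior_Icc] at hx
            exact ((hder x (lt_trans hs0 hx.1)).differentiableAt).differentiableWithinAt
          · intro x hx
            rw [interior_Icc] at hx
            have hx0 : 0 < x := lt_trans hs0 hx.1
            rw [(hder x hx0).deriv]
            have hxle : x ≤ s + t := by linarith [hx.2]
            have hrle : (s+t) ^ (p-2) ≤ x ^ (p-2) :=
              Real.rpow_le_rpow_of_nonpos hx0 hxle (by linarith)
            have : K ≤ p*(p-1)*x^(p-2) := by
              rw [hK]
              nlinarith
            have h1 : 0 ≤ t - x := by linarith [hx.2]
            nlinarith
        exact hmono (left_mem_Icc.2 hst) (right_mem_Icc.2 hst) hst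
      · have hanti : AntitoneOn F (Icc t s) := by
          apply antitoneOn_of_deriv_nonpos (convex_Icc t s)
          · exact fun x hx => (hFC x (lt_of_lt_of_le ht0 hx.1)).continuousWithinAt
          · intro x hx
            rw [interior_Icc] at hx
            exact ((hder x (lt_trans ht0 hx.1)).differentiableAt).differentiableWithinAt
          · intro x hx
            rw [interior_Icc] at hx
            have hx0 : 0 < x := lt_trans ht0 hx.1
            rw [(hder x hx0).deriv]
            have hxle : x ≤ s + t := by linarith [hx.2]
            have hrle : (s+t) ^ (p-2) ≤ x ^ (p-2) :=
              Real.rpow_le_rpow_of_nonpos hx0 hxle (by linarith)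
            have : K ≤ p*(p-1)*x^(p-2) := by
              rw [hK]
              nlinarith
            have h1 : t - x ≤ 0 := by linarith [hx.1]
            nlinarith
        exact hanti (left_mem_Icc.2 hst) (right_mem_Icc.2 hst) hst
    have hFt : F t = t ^ p := by
      rw [hF]
      simp only
      have : t ^ p = t ^ (p-1) * t := by
        rw [show p = (p-1) + 1 by ring, Real.rpow_add_one ht0.ne']
        ring_nf
      rw [this]; ring
    have hFs : F s = p*t*s^(p-1) - (p-1)*s^p + K/2*(t-s)^2 := rfl
    have hsp : s ^ p = s ^ (p-1) * s := by
      rw [show p = (p-1) + 1 by ring, Real.rpow_add_one hs0.ne']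
      ring_nf
    rw [hFt, hFs] at key
    have hcomm : (t + s) ^ (p-2) = (s + t) ^ (p-2) := by rw [add_comm]
    rw [hcomm]
    nlinarith [key, hsp]

section

variable {E : Type*} [NormedAddCommGroup E] [InnerProductSpace ℝ E]

lemma gradIneq {p : ℝ} (hp : 1 < p) (a b : E) :
    ‖b‖ ^ p + p * (‖b‖ ^ (p-2) * ⟪b, a - b⟫_ℝ) ≤ ‖a‖ ^ p := by
  have hp0 : (0:ℝ) < p := by linarith
  rcases eq_or_ne b 0 with rfl | hb
  · simp [Real.zero_rpow hp0.ne', Real.rpow_nonneg (norm_nonneg a) p]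
  · have hs : (0:ℝ) < ‖b‖ := norm_pos_iff.2 hb
    have hinner : ⟪b, a - b⟫_ℝ = ⟪b, a⟫_ℝ - ‖b‖^2 := by
      rw [inner_sub_right, real_inner_self_eq_norm_sq]
    have h1 : ‖b‖ ^ (p-2) * ‖b‖^2 = ‖b‖ ^ p := by
      rw [← Real.rpow_two, ← Real.rpow_add hs]; norm_num
    have h2 : ‖b‖ ^ (p-2) * ‖b‖ = ‖b‖ ^ (p-1) := by
      rw [show p - 1 = (p-2) + 1 by ring, Real.rpow_add_one hs.ne']
    have hip : ⟪b, a⟫_ℝ ≤ ‖b‖ * ‖a‖ := real_inner_le_norm b a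
    have hY := aux_young (x := ‖b‖) (y := ‖a‖) hp (norm_nonneg b) (norm_nonneg a)
    have hmul : ‖b‖ ^ (p-2) * ⟪b, a⟫_ℝ ≤ ‖b‖ ^ (p-1) * ‖a‖ := by
      calc ‖b‖ ^ (p-2) * ⟪b, a⟫_ℝ ≤ ‖b‖ ^ (p-2) * (‖b‖ * ‖a‖) :=
            mul_le_mul_of_nonneg_left hip (Real.rpow_nonneg (norm_nonneg b) _)
        _ = ‖b‖ ^ (p-1) * ‖a‖ := by rw [← h2]; ring
    rw [hinner]
    nlinarith [hY, hmul, h1]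

lemma rpow_superadd {q x y : ℝ} (hq : 1 ≤ q) (hx : 0 ≤ x) (hy : 0 ≤ y) :
    x ^ q + y ^ q ≤ (x + y) ^ q := by
  rcases eq_or_lt_of_le hx with rfl | hx0
  · simp [Real.zero_rpow (by linarith : q ≠ 0)]
  rcases eq_or_lt_of_le hy with rfl | hy0
  · simp [Real.zero_rpow (by linarith : q ≠ 0)]
  have h1 : x ^ q = x * x ^ (q-1) := by
    rw [show q = 1 + (q-1) by ring, Real.rpow_add hx0, Real.rpow_one]
    ring_nf
  have h2 : y ^ q = y * y ^ (q-1) := by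
    rw [show q = 1 + (q-1) by ring, Real.rpow_add hy0, Real.rpow_one]
    ring_nf
  have h3 : (x + y) ^ q = (x+y) * (x+y) ^ (q-1) := by
    rw [show q = 1 + (q-1) by ring, Real.rpow_add (by linarith), Real.rpow_one]
    ring_nf
  have hx1 : x ^ (q-1) ≤ (x+y) ^ (q-1) := Real.rpow_le_rpow hx (by linarith) (by linarith)
  have hy1 : y ^ (q-1) ≤ (x+y) ^ (q-1) := Real.rpow_le_rpow hy (by linarith) (by linarith)
  rw [h1, h2, h3]
  nlinarith [hx1, hy1]

lemma clark {p : ℝ} (hp : 2 ≤ p) (m d : E) :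
    ‖m‖ ^ p + ‖d‖ ^ p ≤ (‖m + d‖ ^ p + ‖m - d‖ ^ p) / 2 := by
  set q := p / 2 with hq
  have hq1 : (1:ℝ) ≤ q := by rw [hq]; linarith
  have hconv : ∀ v : E, (‖v‖^2) ^ q = ‖v‖ ^ p := by
    intro v
    rw [← Real.rpow_two, ← Real.rpow_mul (norm_nonneg v), show (2:ℝ) * q = p by rw [hq]; ring]
  have hpar := parallelogram_law_with_norm ℝ m d
  have hsup := rpow_superadd (x := ‖m‖^2) (y := ‖d‖^2) hq1 (sq_nonneg _) (sq_nonneg _)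
  have heq : ‖m‖^2 + ‖d‖^2 = (‖m+d‖^2 + ‖m-d‖^2) / 2 := by linarith
  have hcx := (convexOn_rpow hq1).2 (Set.mem_Ici.2 (sq_nonneg ‖m+d‖))
    (Set.mem_Ici.2 (sq_nonneg ‖m-d‖)) (by norm_num : (0:ℝ) ≤ 1/2) (by norm_num : (0:ℝ) ≤ 1/2)
    (by norm_num)
  simp only [smul_eq_mul] at hcx
  calc ‖m‖ ^ p + ‖d‖ ^ p = (‖m‖^2) ^ q + (‖d‖^2) ^ q := by rw [hconv, hconv]
    _ ≤ (‖m‖^2 + ‖d‖^2) ^ q := hsup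
    _ = (1/2 * (‖m+d‖^2) + 1/2 * (‖m-d‖^2)) ^ q := by rw [heq]; ring_nf
    _ ≤ 1/2 * (‖m+d‖^2) ^ q + 1/2 * (‖m-d‖^2) ^ q := hcx
    _ = (‖m + d‖ ^ p + ‖m - d‖ ^ p) / 2 := by rw [hconv, hconv]; ring

lemma lemA {p : ℝ} (hp : 2 ≤ p) (a b : E) :
    ‖b‖ ^ p + p * (‖b‖ ^ (p-2) * ⟪b, a - b⟫_ℝ) + 2 ^ (1-p) * ‖a - b‖ ^ p ≤ ‖a‖ ^ p := by
  have hp1 : (1:ℝ) < p := by linarith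
  set m : E := (2:ℝ)⁻¹ • (a + b) with hm
  set d : E := (2:ℝ)⁻¹ • (a - b) with hd
  have hmd1 : m + d = a := by rw [hm, hd]; module
  have hmd2 : m - d = b := by rw [hm, hd]; module
  have hcl := clark hp m d
  rw [hmd1, hmd2] at hcl
  have hgr := gradIneq hp1 m b
  have hmb : m - b = d := by rw [hm, hd]; module
  have hinner : ⟪b, m - b⟫_ℝ = (2:ℝ)⁻¹ * ⟪b, a - b⟫_ℝ := by
    rw [hmb, hd, real_inner_smul_right]
  rw [hinner] at hgr
  have hdn : ‖d‖ = (2:ℝ)⁻¹ * ‖a - b‖ := by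
    rw [hd, norm_smul]
    norm_num
  have hdp : ‖d‖ ^ p = 2 ^ (-p) * ‖a - b‖ ^ p := by
    rw [hdn, Real.mul_rpow (by norm_num) (norm_nonneg _),
      Real.inv_rpow (by norm_num : (0:ℝ) ≤ 2), ← Real.rpow_neg (by norm_num : (0:ℝ) ≤ 2)]
  have h2p : (2:ℝ) ^ (1-p) = 2 * 2 ^ (-p) := by
    rw [show (1:ℝ) - p = 1 + (-p) by ring, Real.rpow_add (by norm_num), Real.rpow_one]
  rw [h2p]
  nlinarith [hcl, hgr, hdp]

lemma lemB {p : ℝ} (hp1 : 1 < p) (hp2 : p ≤ 2) (a b : E) :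
    ‖b‖ ^ p + p * (‖b‖ ^ (p-2) * ⟪b, a - b⟫_ℝ)
      + p * (p-1) / 2 * ((‖a‖ + ‖b‖) ^ (p-2) * ‖a - b‖ ^ (2:ℝ)) ≤ ‖a‖ ^ p := by
  have hp0 : (0:ℝ) < p := by linarith
  have hc1 : p * (p-1) / 2 ≤ 1 := by nlinarith
  rcases eq_or_ne b 0 with rfl | hb
  · rcases eq_or_ne a 0 with rfl | ha
    · simp [Real.zero_rpow hp0.ne', Real.zero_rpow (by norm_num : (2:ℝ) ≠ 0)]
    · have ha0 : (0:ℝ) < ‖a‖ := norm_pos_iff.2 ha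
      have h1 : (‖a‖ + ‖(0:E)‖) ^ (p-2) * ‖a - 0‖ ^ (2:ℝ) = ‖a‖ ^ p := by
        rw [norm_zero, add_zero, sub_zero, ← Real.rpow_add ha0]
        norm_num
      rw [h1]
      simp only [inner_zero_left, norm_zero, mul_zero, Real.zero_rpow hp0.ne']
      nlinarith [Real.rpow_nonneg (norm_nonneg a) p]
  · have hs : (0:ℝ) < ‖b‖ := norm_pos_iff.2 hb
    set s := ‖b‖ with hsdef
    set t := ‖a‖ with htdef
    have ht : (0:ℝ) ≤ t := norm_nonneg a
    set ip := ⟪b, a⟫_ℝ with hip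
    have hinner : ⟪b, a - b⟫_ℝ = ip - s^2 := by
      rw [inner_sub_right, real_inner_self_eq_norm_sq, hip]
    have hnsq : ‖a - b‖ ^ (2:ℝ) = t^2 - 2*ip + s^2 := by
      rw [Real.rpow_two, norm_sub_sq_real, real_inner_comm]
    have hiple : ip ≤ s * t := by
      rw [hip, hsdef, htdef]
      exact real_inner_le_norm b a
    have h2 := Real.rpow_add_one hs.ne' (p-2)
    rw [show p - 2 + 1 = p - 1 by ring] at h2
    have h5 := Real.rpow_add_one hs.ne' (p-1)
    rw [show p - 1 + 1 = p by ring] at h5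
    have e1 : s ^ (p-2) * s ^ 2 = s ^ p := by rw [sq, ← mul_assoc, ← h2, ← h5]
    have e4 : s ^ (p-2) * (s * t) = s ^ (p-1) * t := by rw [← mul_assoc, ← h2]
    have hX : (t + s) ^ (p-2) ≤ s ^ (p-2) :=
      Real.rpow_le_rpow_of_nonpos hs (by linarith) (by linarith)
    have hXnn : 0 ≤ (t + s) ^ (p-2) := Real.rpow_nonneg (by linarith) _
    have hS := scalarS hp1 hp2 hs.le ht
    have h7a : p * (p-1) * ((t+s) ^ (p-2)) ≤ p * s ^ (p-2) := by
      nlinarith [mul_le_mul_of_nonneg_left hX (by nlinarith : (0:ℝ) ≤ p*(p-1)),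
        mul_nonneg (show (0:ℝ) ≤ p*(2-p) by nlinarith) (Real.rpow_nonneg hs.le (p-2))]
    have h7 : 0 ≤ (s * t - ip) * (p * s ^ (p-2) - p * (p-1) * ((t+s) ^ (p-2))) :=
      mul_nonneg (by linarith) (by linarith)
    rw [hinner, hnsq]
    nlinarith [hS, h7, e1, h5, e4]

end


section
variable {E : Type*} [NormedAddCommGroup E] [InnerProductSpace ℝ E]

lemma measurable_rpow_c (c : ℝ) : Measurable fun t : ℝ => t ^ c :=
  measurable_of_continuousOn_compl_singleton 0 fun t ht =>
    (Real.continuousAt_rpow_const t c (Or.inl ht)).continuousWithinAt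

lemma add_rpow_le2 {q x y : ℝ} (hq : 0 ≤ q) (hx : 0 ≤ x) (hy : 0 ≤ y) :
    (x + y) ^ q ≤ 2 ^ q * (x ^ q + y ^ q) := by
  have h1 : x + y ≤ 2 * max x y := by
    rcases le_total x y with h | h
    · rw [max_eq_right h]; linarith
    · rw [max_eq_left h]; linarith
  have h2 : (x + y) ^ q ≤ (2 * max x y) ^ q :=
    Real.rpow_le_rpow (by linarith) h1 hq
  have h3 : (2 * max x y) ^ q = 2 ^ q * (max x y) ^ q :=
    Real.mul_rpow (by norm_num) (le_max_of_le_left hx)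
  have h4 : (max x y) ^ q ≤ x ^ q + y ^ q := by
    rcases le_total x y with h | h
    · rw [max_eq_right h]
      nlinarith [Real.rpow_nonneg hx q]
    · rw [max_eq_left h]
      nlinarith [Real.rpow_nonneg hy q]
  calc (x + y) ^ q ≤ (2 * max x y) ^ q := h2
    _ = 2 ^ q * (max x y) ^ q := h3
    _ ≤ 2 ^ q * (x ^ q + y ^ q) := by
        have : (0:ℝ) ≤ (2:ℝ) ^ q := Real.rpow_nonneg (by norm_num) q
        nlinarith

lemma boundh {p : ℝ} (hp : 1 < p) (a b : E) :
    |‖b‖ ^ (p-2) * ⟪b, a - b⟫_ℝ| ≤ 2 ^ p * (‖a‖ ^ p + ‖b‖ ^ p) := by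
  have hRnn : (0:ℝ) ≤ 2 ^ p * (‖a‖ ^ p + ‖b‖ ^ p) := by
    have := Real.rpow_nonneg (norm_nonneg a) p
    have := Real.rpow_nonneg (norm_nonneg b) p
    have : (0:ℝ) ≤ (2:ℝ) ^ p := Real.rpow_nonneg (by norm_num) p
    positivity
  rcases eq_or_ne b 0 with rfl | hb
  · simpa [inner_zero_left] using hRnn
  · have hs : (0:ℝ) < ‖b‖ := norm_pos_iff.2 hb
    have ht : (0:ℝ) ≤ ‖a‖ := norm_nonneg a
    have h2 := Real.rpow_add_one hs.ne' (p-2)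
    rw [show p - 2 + 1 = p - 1 by ring] at h2
    have hts : (0:ℝ) < ‖a‖ + ‖b‖ := by linarith
    have h3 := Real.rpow_add_one hts.ne' (p-1)
    rw [show p - 1 + 1 = p by ring] at h3
    have hi : |⟪b, a - b⟫_ℝ| ≤ ‖b‖ * (‖a‖ + ‖b‖) := by
      calc |⟪b, a - b⟫_ℝ| ≤ ‖b‖ * ‖a - b‖ := abs_real_inner_le_norm b (a - b)
        _ ≤ ‖b‖ * (‖a‖ + ‖b‖) := by
            have := norm_sub_le a b
            nlinarith
    have hX : ‖b‖ ^ (p-2) * ‖b‖ ≤ (‖a‖ + ‖b‖) ^ (p-1) := by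
      rw [← h2]
      exact Real.rpow_le_rpow hs.le (by linarith) (by linarith)
    calc |‖b‖ ^ (p-2) * ⟪b, a - b⟫_ℝ| = ‖b‖ ^ (p-2) * |⟪b, a - b⟫_ℝ| := by
          rw [abs_mul, abs_of_nonneg (Real.rpow_nonneg hs.le _)]
      _ ≤ ‖b‖ ^ (p-2) * (‖b‖ * (‖a‖ + ‖b‖)) :=
          mul_le_mul_of_nonneg_left hi (Real.rpow_nonneg hs.le _)
      _ = (‖b‖ ^ (p-2) * ‖b‖) * (‖a‖ + ‖b‖) := by ring
      _ ≤ (‖a‖ + ‖b‖) ^ (p-1) * (‖a‖ + ‖b‖) :=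
          mul_le_mul_of_nonneg_right hX hts.le
      _ = (‖a‖ + ‖b‖) ^ p := h3.symm
      _ ≤ 2 ^ p * (‖a‖ ^ p + ‖b‖ ^ p) := add_rpow_le2 (by linarith) ht hs.le

lemma boundgA {p : ℝ} (hp : 0 ≤ p) (a b : E) :
    ‖a - b‖ ^ p ≤ 2 ^ p * (‖a‖ ^ p + ‖b‖ ^ p) := by
  calc ‖a - b‖ ^ p ≤ (‖a‖ + ‖b‖) ^ p :=
        Real.rpow_le_rpow (norm_nonneg _) (norm_sub_le a b) hp
    _ ≤ 2 ^ p * (‖a‖ ^ p + ‖b‖ ^ p) := add_rpow_le2 hp (norm_nonneg a) (norm_nonneg b)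

lemma boundgB {p : ℝ} (hp1 : 1 < p) (a b : E) :
    (‖a‖ + ‖b‖) ^ (p-2) * ‖a - b‖ ^ (2:ℝ) ≤ 2 ^ p * (‖a‖ ^ p + ‖b‖ ^ p) := by
  have hRnn : (0:ℝ) ≤ 2 ^ p * (‖a‖ ^ p + ‖b‖ ^ p) := by
    have := Real.rpow_nonneg (norm_nonneg a) p
    have := Real.rpow_nonneg (norm_nonneg b) p
    have : (0:ℝ) ≤ (2:ℝ) ^ p := Real.rpow_nonneg (by norm_num) p
    positivity
  rcases eq_or_lt_of_le (by positivity : (0:ℝ) ≤ ‖a‖ + ‖b‖) with h0 | h0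
  · have ha : ‖a‖ = 0 := by
      have := norm_nonneg a; have := norm_nonneg b; linarith [h0.symm]
    have hb : ‖b‖ = 0 := by
      have := norm_nonneg a; have := norm_nonneg b; linarith [h0.symm]
    have hab : ‖a - b‖ = 0 := by
      have := norm_sub_le a b; have := norm_nonneg (a - b); linarith
    rw [hab, Real.zero_rpow (by norm_num : (2:ℝ) ≠ 0), mul_zero]
    exact hRnn
  · have h1 : ‖a - b‖ ^ (2:ℝ) ≤ (‖a‖ + ‖b‖) ^ (2:ℝ) :=
      Real.rpow_le_rpow (norm_nonneg _) (norm_sub_le a b) (by norm_num)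
    have h2 : (‖a‖ + ‖b‖) ^ (p-2) * (‖a‖ + ‖b‖) ^ (2:ℝ) = (‖a‖ + ‖b‖) ^ p := by
      rw [← Real.rpow_add h0]; norm_num
    calc (‖a‖ + ‖b‖) ^ (p-2) * ‖a - b‖ ^ (2:ℝ)
        ≤ (‖a‖ + ‖b‖) ^ (p-2) * (‖a‖ + ‖b‖) ^ (2:ℝ) :=
          mul_le_mul_of_nonneg_left h1 (Real.rpow_nonneg h0.le _)
      _ = (‖a‖ + ‖b‖) ^ p := h2
      _ ≤ 2 ^ p * (‖a‖ ^ p + ‖b‖ ^ p) := add_rpow_le2 (by linarith) (norm_nonneg a) (norm_nonneg b)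

end

/-- Energy comparison with a `p`-harmonic replacement `w` of `u`: lower bounds for the
energy gap in terms of the gradient difference, in both regimes. -/
theorem stmt9 (N : ℕ) (hN : 1 ≤ N) (p : ℝ) (hp : 1 < p) :
    ∃ C : ℝ, 0 < C ∧
      ∀ (z : EuclideanSpace ℝ (Fin N)) (r : ℝ), 0 < r →
      ∀ u w : EuclideanSpace ℝ (Fin N) → ℝ,
        (∀ x ∈ Metric.ball z r, DifferentiableAt ℝ u x) →
        ContinuousOn (fun x => gradient u x) (Metric.ball z r) →
        (∀ x ∈ Metric.ball z r, DifferentiableAt ℝ w x) →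
        ContinuousOn (fun x => gradient w x) (Metric.ball z r) →
        IntegrableOn (fun x => ‖gradient u x‖ ^ p) (Metric.ball z r) volume →
        IntegrableOn (fun x => ‖gradient w x‖ ^ p) (Metric.ball z r) volume →
        (∫ x in Metric.ball z r,
          ‖gradient w x‖ ^ (p - 2) *
            ⟪gradient w x, gradient u x - gradient w x⟫_ℝ) = 0 →
        ((2 ≤ p →
            C * (∫ x in Metric.ball z r, ‖gradient u x - gradient w x‖ ^ p) ≤
              ∫ x in Metric.ball z r, (‖gradient u x‖ ^ p - ‖gradient w x‖ ^ p)) ∧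
          (p ≤ 2 →
            C * (∫ x in Metric.ball z r,
                (‖gradient u x‖ + ‖gradient w x‖) ^ (p - 2) *
                  ‖gradient u x - gradient w x‖ ^ (2 : ℝ)) ≤
              ∫ x in Metric.ball z r, (‖gradient u x‖ ^ p - ‖gradient w x‖ ^ p))) := by
  refine ⟨min (2 ^ (1-p)) (p * (p-1) / 2),
    lt_min (Real.rpow_pos_of_pos (by norm_num) _) (by nlinarith), ?_⟩
  set C := min ((2:ℝ) ^ (1-p)) (p * (p-1) / 2) with hCdef
  intro z r hr u w hud hUc hwd hWc hIu hIw horth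
  set Bl := Metric.ball z r with hBl
  have meas : MeasurableSet Bl := measurableSet_ball
  set A := gradient u with hA
  set B := gradient w with hB
  have hAm : AEMeasurable A (volume.restrict Bl) := hUc.aemeasurable meas
  have hBm : AEMeasurable B (volume.restrict Bl) := hWc.aemeasurable meas
  have hABm : AEMeasurable (fun x => A x - B x) (volume.restrict Bl) := hAm.sub hBm
  set h : EuclideanSpace ℝ (Fin N) → ℝ :=
    fun x => ‖B x‖ ^ (p-2) * ⟪B x, A x - B x⟫_ℝ with hh
  have hhm : AEStronglyMeasurable h (volume.restrict Bl) :=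
    (((measurable_rpow_c (p-2)).comp_aemeasurable hBm.norm).mul
      (hBm.inner hABm)).aestronglyMeasurable
  have hMint : Integrable (fun x => 2 ^ p * (‖A x‖ ^ p + ‖B x‖ ^ p))
      (volume.restrict Bl) := ((hIu.add hIw).const_mul _)
  have Ih : Integrable h (volume.restrict Bl) :=
    hMint.mono' hhm (Filter.Eventually.of_forall fun x => by
      rw [Real.norm_eq_abs]; exact boundh hp _ _)
  constructor
  · -- p ≥ 2
    intro hp2
    set g : EuclideanSpace ℝ (Fin N) → ℝ := fun x => ‖A x - B x‖ ^ p with hg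
    have hgm : AEStronglyMeasurable g (volume.restrict Bl) :=
      ((measurable_rpow_c p).comp_aemeasurable hABm.norm).aestronglyMeasurable
    have hgnn : ∀ x, 0 ≤ g x := fun x => Real.rpow_nonneg (norm_nonneg _) _
    have Ig : Integrable g (volume.restrict Bl) :=
      hMint.mono' hgm (Filter.Eventually.of_forall fun x => by
        rw [Real.norm_eq_abs, abs_of_nonneg (hgnn x)]; exact boundgA (by linarith) _ _)
    have key : ∀ x, ‖B x‖ ^ p + p * h x + C * g x ≤ ‖A x‖ ^ p := by
      intro x
      have h1 := lemA hp2 (A x) (B x)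
      have hx : h x = ‖B x‖ ^ (p-2) * ⟪B x, A x - B x⟫_ℝ := rfl
      have gx : g x = ‖A x - B x‖ ^ p := rfl
      rw [← hx, ← gx] at h1
      have h3 : C * g x ≤ 2 ^ (1-p) * g x :=
        mul_le_mul_of_nonneg_right (min_le_left _ _) (hgnn x)
      linarith
    have hint1 : Integrable (fun x => p * h x) (volume.restrict Bl) := Ih.const_mul p
    have hint2 : Integrable (fun x => C * g x) (volume.restrict Bl) := Ig.const_mul C
    have hsum1 : Integrable (fun x => ‖B x‖ ^ p + p * h x) (volume.restrict Bl) :=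
      hIw.add hint1
    have hsum : Integrable (fun x => ‖B x‖ ^ p + p * h x + C * g x)
        (volume.restrict Bl) := hsum1.add hint2
    have hmono : (∫ x in Bl, (‖B x‖ ^ p + p * h x + C * g x)) ≤ ∫ x in Bl, ‖A x‖ ^ p :=
      setIntegral_mono_on hsum hIu meas (fun x _ => key x)
    have e1 : (∫ x in Bl, (‖B x‖ ^ p + p * h x + C * g x))
        = (∫ x in Bl, ‖B x‖ ^ p) + p * (∫ x in Bl, h x) + C * ∫ x in Bl, g x := by
      rw [integral_add hsum1 hint2, integral_add hIw hint1,
        integral_const_mul, integral_const_mul]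
    have horth' : (∫ x in Bl, h x) = 0 := horth
    rw [e1, horth', mul_zero, add_zero] at hmono
    have e2 : (∫ x in Bl, (‖A x‖ ^ p - ‖B x‖ ^ p))
        = (∫ x in Bl, ‖A x‖ ^ p) - ∫ x in Bl, ‖B x‖ ^ p := integral_sub hIu hIw
    rw [e2]
    linarith
  · -- p ≤ 2
    intro hp2
    set g : EuclideanSpace ℝ (Fin N) → ℝ :=
      fun x => (‖A x‖ + ‖B x‖) ^ (p-2) * ‖A x - B x‖ ^ (2:ℝ) with hg
    have hgm : AEStronglyMeasurable g (volume.restrict Bl) :=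
      (((measurable_rpow_c (p-2)).comp_aemeasurable (hAm.norm.add hBm.norm)).mul
        ((measurable_rpow_c 2).comp_aemeasurable hABm.norm)).aestronglyMeasurable
    have hgnn : ∀ x, 0 ≤ g x := fun x =>
      mul_nonneg (Real.rpow_nonneg (by positivity) _) (Real.rpow_nonneg (norm_nonneg _) _)
    have Ig : Integrable g (volume.restrict Bl) :=
      hMint.mono' hgm (Filter.Eventually.of_forall fun x => by
        rw [Real.norm_eq_abs, abs_of_nonneg (hgnn x)]; exact boundgB hp _ _)
    have key : ∀ x, ‖B x‖ ^ p + p * h x + C * g x ≤ ‖A x‖ ^ p := by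
      intro x
      have h1 := lemB hp hp2 (A x) (B x)
      have hx : h x = ‖B x‖ ^ (p-2) * ⟪B x, A x - B x⟫_ℝ := rfl
      have gx : g x = (‖A x‖ + ‖B x‖) ^ (p-2) * ‖A x - B x‖ ^ (2:ℝ) := rfl
      rw [← hx, ← gx] at h1
      have h3 : C * g x ≤ p * (p-1) / 2 * g x :=
        mul_le_mul_of_nonneg_right (min_le_right _ _) (hgnn x)
      linarith
    have hint1 : Integrable (fun x => p * h x) (volume.restrict Bl) := Ih.const_mul p
    have hint2 : Integrable (fun x => C * g x) (volume.restrict Bl) := Ig.const_mul C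
    have hsum1 : Integrable (fun x => ‖B x‖ ^ p + p * h x) (volume.restrict Bl) :=
      hIw.add hint1
    have hsum : Integrable (fun x => ‖B x‖ ^ p + p * h x + C * g x)
        (volume.restrict Bl) := hsum1.add hint2
    have hmono : (∫ x in Bl, (‖B x‖ ^ p + p * h x + C * g x)) ≤ ∫ x in Bl, ‖A x‖ ^ p :=
      setIntegral_mono_on hsum hIu meas (fun x _ => key x)
    have e1 : (∫ x in Bl, (‖B x‖ ^ p + p * h x + C * g x))
        = (∫ x in Bl, ‖B x‖ ^ p) + p * (∫ x in Bl, h x) + C * ∫ x in Bl, g x := by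
      rw [integral_add hsum1 hint2, integral_add hIw hint1,
        integral_const_mul, integral_const_mul]
    have horth' : (∫ x in Bl, h x) = 0 := horth
    rw [e1, horth', mul_zero, add_zero] at hmono
    have e2 : (∫ x in Bl, (‖A x‖ ^ p - ‖B x‖ ^ p))
        = (∫ x in Bl, ‖A x‖ ^ p) - ∫ x in Bl, ‖B x‖ ^ p := integral_sub hIu hIw
    rw [e2]
    linarith
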